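/- Let d ≥ 2 and n ≥ 2 be integers and k_1, …, k_{n+1} integers with 1 ≤ k_i ≤ d−1 and gcd(d, k_1, …, k_{n+1}) = 1. For an integer s coprime to d define ν_j(s) = {(k_1 + ⋯ + k_j)s/d} and μ_i(s) = {k_i s/d}, where {x} is the fractional part. Then the following are equivalent: (a) condition (*): for every integer s coprime to d and every j with 1 ≤ j ≤ n−1, the integer ⌊ν_j(s) + μ_{j+1}(s) + μ_{j+2}(s)⌋ is even; (b) condition (SS): for every integer s coprime to d, either ∑_{i=1}^{n+1} {k_i s/d} < 1 or ∑_{i=1}^{n+1} {−k_i s/d} < 1. -/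
import Mathlib
open Finset

noncomputable def mu (d : ℕ) (s : ℤ) (g : ℕ → ℤ) (i : ℕ) : ℝ :=
  Int.fract ((g i : ℝ) * s / d)

noncomputable def nu (d : ℕ) (s : ℤ) (g : ℕ → ℤ) (j : ℕ) : ℝ :=
  Int.fract (((∑ i ∈ range j, g i : ℤ) : ℝ) * s / d)

noncomputable def aa (d : ℕ) (s : ℤ) (g : ℕ → ℤ) (j : ℕ) : ℤ :=
  ⌊nu d s g j + mu d s g j⌋

lemma fract_add' (x y : ℝ) :
    Int.fract (x + y) = Int.fract x + Int.fract y - ⌊Int.fract x + Int.fract y⌋ := by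
  have h1 : x + y = (⌊x⌋ + ⌊y⌋ : ℤ) + (Int.fract x + Int.fract y) := by
    push_cast
    unfold Int.fract
    ring
  rw [h1, Int.fract_intCast_add]
  rw [Int.fract]

lemma nu_succ (d : ℕ) (s : ℤ) (g : ℕ → ℤ) (j : ℕ) :
    nu d s g (j + 1) = nu d s g j + mu d s g j - aa d s g j := by
  unfold nu aa mu nu
  rw [sum_range_succ]
  have : ((∑ i ∈ range j, g i + g j : ℤ) : ℝ) * s / d
      = (∑ i ∈ range j, g i : ℤ) * s / d + (g j : ℝ) * s / d := by
    push_cast; ring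
  rw [this, fract_add']

lemma mu_nonneg (d : ℕ) (s : ℤ) (g : ℕ → ℤ) (i : ℕ) : 0 ≤ mu d s g i :=
  Int.fract_nonneg _

lemma mu_lt_one (d : ℕ) (s : ℤ) (g : ℕ → ℤ) (i : ℕ) : mu d s g i < 1 :=
  Int.fract_lt_one _

lemma nu_nonneg (d : ℕ) (s : ℤ) (g : ℕ → ℤ) (j : ℕ) : 0 ≤ nu d s g j :=
  Int.fract_nonneg _

lemma nu_lt_one (d : ℕ) (s : ℤ) (g : ℕ → ℤ) (j : ℕ) : nu d s g j < 1 :=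
  Int.fract_lt_one _

lemma aa_bounds (d : ℕ) (s : ℤ) (g : ℕ → ℤ) (j : ℕ) :
    0 ≤ aa d s g j ∧ aa d s g j ≤ 1 := by
  unfold aa
  constructor
  · exact Int.floor_nonneg.mpr (add_nonneg (nu_nonneg d s g j) (mu_nonneg d s g j))
  · have h2 : nu d s g j + mu d s g j < 2 := by
      have := mu_lt_one d s g j; have := nu_lt_one d s g j; linarith
    have : (⌊nu d s g j + mu d s g j⌋ : ℝ) < 2 :=
      lt_of_le_of_lt (Int.floor_le _) h2
    exact_mod_cast Int.lt_add_one_iff.mp (by exact_mod_cast this)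

lemma nu_eq_sum (d : ℕ) (s : ℤ) (g : ℕ → ℤ) (m : ℕ) :
    nu d s g m = ∑ i ∈ range m, mu d s g i - ∑ j ∈ range m, (aa d s g j : ℝ) := by
  induction m with
  | zero => simp [nu]
  | succ m ih =>
      rw [nu_succ, ih, sum_range_succ, sum_range_succ]
      ring

lemma floor3 (d : ℕ) (s : ℤ) (g : ℕ → ℤ) (j : ℕ) :
    ⌊nu d s g j + mu d s g j + mu d s g (j + 1)⌋ = aa d s g j + aa d s g (j + 1) := by
  have h : nu d s g j + mu d s g j + mu d s g (j+1)
      = (aa d s g j : ℝ) + (nu d s g (j+1) + mu d s g (j+1)) := by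
    rw [nu_succ]; ring
  rw [h, Int.floor_intCast_add]
  rfl

lemma mu_ne_zero (d : ℕ) (s : ℤ) (g : ℕ → ℤ) (i : ℕ) (hd : 2 ≤ d)
    (hs : Int.gcd s d = 1) (h1 : 1 ≤ g i) (h2 : g i ≤ (d : ℤ) - 1) :
    mu d s g i ≠ 0 := by
  intro h
  unfold mu at h
  rw [Int.fract_eq_iff] at h
  obtain ⟨-, -, z, hz⟩ := h
  have hd0 : (d : ℝ) ≠ 0 := by positivity
  have hzz : (g i : ℝ) * s = z * d := by
    field_simp at hz; linarith [hz]
  have hzz' : g i * s = z * d := by exact_mod_cast hzz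
  have hdvd : (d : ℤ) ∣ g i * s := ⟨z, by linarith [hzz']⟩
  have hcop : Int.gcd (d : ℤ) s = 1 := by rw [Int.gcd_comm]; exact hs
  have : (d : ℤ) ∣ g i := (Int.isCoprime_iff_gcd_eq_one.mpr hcop).dvd_of_dvd_mul_right hdvd
  have := Int.le_of_dvd (by omega) this
  omega

lemma mu_neg (d : ℕ) (s : ℤ) (g : ℕ → ℤ) (i : ℕ) (hd : 2 ≤ d)
    (hs : Int.gcd s d = 1) (h1 : 1 ≤ g i) (h2 : g i ≤ (d : ℤ) - 1) :
    mu d (-s) g i = 1 - mu d s g i := by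
  unfold mu
  have h : (g i : ℝ) * ((-s : ℤ) : ℝ) / d = -((g i : ℝ) * s / d) := by push_cast; ring
  rw [h, Int.fract_neg (mu_ne_zero d s g i hd hs h1 h2)]

-- sum identity: S = nu (n+1) + sum of aa
lemma sum_mu_eq (d : ℕ) (s : ℤ) (g : ℕ → ℤ) (m : ℕ) :
    ∑ i ∈ range m, mu d s g i = nu d s g m + ∑ j ∈ range m, (aa d s g j : ℝ) := by
  rw [nu_eq_sum]; ring

-- complement sum
lemma sum_mu_neg (d n : ℕ) (s : ℤ) (g : ℕ → ℤ) (hd : 2 ≤ d)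
    (hs : Int.gcd s d = 1) (hb : ∀ i < n + 1, 1 ≤ g i ∧ g i ≤ (d : ℤ) - 1) :
    ∑ i ∈ range (n+1), mu d (-s) g i = (n + 1 : ℝ) - ∑ i ∈ range (n+1), mu d s g i := by
  have : ∑ i ∈ range (n+1), mu d (-s) g i = ∑ i ∈ range (n+1), (1 - mu d s g i) := by
    apply sum_congr rfl
    intro i hi
    exact mu_neg d s g i hd hs (hb i (mem_range.mp hi)).1 (hb i (mem_range.mp hi)).2
  rw [this, sum_sub_distrib, sum_const, card_range]
  push_cast; ring

-- classification: if all consecutive carries are "even-paired" then all equal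
lemma carries_const (d n : ℕ) (s : ℤ) (g : ℕ → ℤ) (hn : 2 ≤ n)
    (h : ∀ j, 1 ≤ j → j ≤ n - 1 → Even (aa d s g j + aa d s g (j+1))) :
    ∀ j, 1 ≤ j → j ≤ n → aa d s g j = aa d s g 1 := by
  intro j hj1 hj2
  induction j with
  | zero => omega
  | succ j ih =>
      rcases Nat.eq_or_lt_of_le hj1 with h0 | h0
      · have hj0 : j = 0 := by omega
        subst hj0
        norm_num
      · have hj : 1 ≤ j := by omega
        have := ih hj (by omega)
        have he := h j hj (by omega)
        have b1 := aa_bounds d s g j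
        have b2 := aa_bounds d s g (j+1)
        rw [Int.even_iff] at he
        omega

lemma aa_zero (d : ℕ) (s : ℤ) (g : ℕ → ℤ) : aa d s g 0 = 0 := by
  unfold aa nu
  rw [range_zero, sum_empty]
  norm_num
  exact ⟨mu_nonneg d s g 0, mu_lt_one d s g 0⟩

lemma sum_aa_split (d n : ℕ) (s : ℤ) (g : ℕ → ℤ) :
    ∑ j ∈ range (n+1), (aa d s g j : ℝ) = ∑ t ∈ range n, (aa d s g (t+1) : ℝ) := by
  rw [sum_range_succ' (fun j => (aa d s g j : ℝ)) n, aa_zero]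
  norm_num

lemma all_aa_zero (d n : ℕ) (s : ℤ) (g : ℕ → ℤ)
    (h : ∑ i ∈ range (n+1), mu d s g i < 1) : ∀ t < n, aa d s g (t+1) = 0 := by
  have hsum := sum_mu_eq d s g (n+1)
  rw [sum_aa_split] at hsum
  have hA : ∑ t ∈ range n, (aa d s g (t+1) : ℝ) < 1 := by
    have := nu_nonneg d s g (n+1); linarith
  have hAz : ∑ t ∈ range n, aa d s g (t+1) = 0 := by
    have hc : ((∑ t ∈ range n, aa d s g (t+1) : ℤ) : ℝ) < 1 := by push_cast; linarith [hA]
    have h1 : (∑ t ∈ range n, aa d s g (t+1) : ℤ) < 1 := by exact_mod_cast hc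
    have h0 : 0 ≤ (∑ t ∈ range n, aa d s g (t+1) : ℤ) :=
      sum_nonneg fun t _ => (aa_bounds d s g (t+1)).1
    omega
  intro t ht
  have := (sum_eq_zero_iff_of_nonneg (fun t _ => (aa_bounds d s g (t+1)).1)).mp hAz
  exact this t (mem_range.mpr ht)

lemma all_aa_one (d n : ℕ) (s : ℤ) (g : ℕ → ℤ)
    (h : (n : ℝ) < ∑ i ∈ range (n+1), mu d s g i) : ∀ t < n, aa d s g (t+1) = 1 := by
  have hsum := sum_mu_eq d s g (n+1)
  rw [sum_aa_split] at hsum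
  have hA : (n : ℝ) - 1 < ∑ t ∈ range n, (aa d s g (t+1) : ℝ) := by
    have := nu_lt_one d s g (n+1); linarith
  have hAn : (n : ℤ) ≤ ∑ t ∈ range n, aa d s g (t+1) := by
    have hc : ((n : ℤ) : ℝ) - 1 < ((∑ t ∈ range n, aa d s g (t+1) : ℤ) : ℝ) := by
      push_cast; linarith [hA]
    have : (n : ℤ) - 1 < ∑ t ∈ range n, aa d s g (t+1) := by exact_mod_cast hc
    omega
  have hup : ∑ t ∈ range n, aa d s g (t+1) ≤ (n : ℤ) := by
    calc ∑ t ∈ range n, aa d s g (t+1) ≤ ∑ t ∈ range n, 1 :=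
          sum_le_sum (fun t _ => (aa_bounds d s g (t+1)).2)
      _ = (n : ℤ) := by simp
  have hz : ∑ t ∈ range n, (1 - aa d s g (t+1)) = 0 := by
    rw [sum_sub_distrib, sum_const, card_range]
    simp only [nsmul_eq_mul, mul_one]
    omega
  intro t ht
  have := (sum_eq_zero_iff_of_nonneg
      (fun t _ => by linarith [(aa_bounds d s g (t+1)).2])).mp hz t (mem_range.mpr ht)
  omega

def gAux (n : ℕ) (k : Fin (n + 1) → ℤ) (i : ℕ) : ℤ :=
  if h : i < n + 1 then k ⟨i, h⟩ else 0

theorem condStar_iff_condSS (d n : ℕ) (hd : 2 ≤ d) (hn : 2 ≤ n)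
    (k : Fin (n + 1) → ℤ)
    (hk : ∀ i, 1 ≤ k i ∧ k i ≤ (d : ℤ) - 1)
    (hgcd : Int.gcd (d : ℤ) (Finset.univ.gcd k) = 1) :
    (∀ s : ℤ, Int.gcd s d = 1 → ∀ j (hj1 : 1 ≤ j) (hj2 : j ≤ n - 1),
        Even ⌊Int.fract (((∑ i : Fin j, k (Fin.castLE (by omega) i) : ℤ) : ℝ) * s / d) +
          Int.fract ((k ⟨j, by omega⟩ : ℝ) * s / d) +
          Int.fract ((k ⟨j + 1, by omega⟩ : ℝ) * s / d)⌋) ↔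
    (∀ s : ℤ, Int.gcd s d = 1 →
      (∑ i, Int.fract ((k i : ℝ) * s / d) < 1 ∨
       ∑ i, Int.fract (-((k i : ℝ) * s) / d) < 1)) := by
  set g : ℕ → ℤ := gAux n k with hgdef
  have hgb : ∀ i < n + 1, 1 ≤ g i ∧ g i ≤ (d : ℤ) - 1 := by
    intro i hi
    simp only [hgdef, gAux, dif_pos hi]
    exact hk _
  have hgval : ∀ (i : ℕ) (h : i < n + 1), g i = k ⟨i, h⟩ := by
    intro i h
    simp only [hgdef, gAux, dif_pos h]
  -- conversion for partial sums
  have hfin : ∀ (j : ℕ) (h : j ≤ n + 1),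
      (∑ i : Fin j, k (Fin.castLE h i)) = ∑ i ∈ range j, g i := by
    intro j h
    rw [← Fin.sum_univ_eq_sum_range (fun i => g i) j]
    apply sum_congr rfl
    intro i _
    rw [hgval i.val (lt_of_lt_of_le i.isLt h)]
    rfl
  -- conversion for the full sums
  have hSpos : ∀ s : ℤ,
      ∑ i, Int.fract ((k i : ℝ) * s / d) = ∑ i ∈ range (n+1), mu d s g i := by
    intro s
    rw [← Fin.sum_univ_eq_sum_range (fun i => mu d s g i) (n+1)]
    apply sum_congr rfl
    intro i _
    show _ = mu d s g i.val
    unfold mu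
    rw [hgval i.val i.isLt]
  have hSneg : ∀ s : ℤ,
      ∑ i, Int.fract (-((k i : ℝ) * s) / d) = ∑ i ∈ range (n+1), mu d (-s) g i := by
    intro s
    rw [← Fin.sum_univ_eq_sum_range (fun i => mu d (-s) g i) (n+1)]
    apply sum_congr rfl
    intro i _
    show _ = mu d (-s) g i.val
    unfold mu
    rw [hgval i.val i.isLt]
    congr 1
    push_cast
    ring
  -- the (*) condition in terms of carries
  have hstar_iff : ∀ s : ℤ, ∀ j (hj1 : 1 ≤ j) (hj2 : j ≤ n - 1),
      ⌊Int.fract (((∑ i : Fin j, k (Fin.castLE (by omega) i) : ℤ) : ℝ) * s / d) +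
          Int.fract ((k ⟨j, by omega⟩ : ℝ) * s / d) +
          Int.fract ((k ⟨j + 1, by omega⟩ : ℝ) * s / d)⌋
        = aa d s g j + aa d s g (j + 1) := by
    intro s j hj1 hj2
    rw [hfin j (by omega), ← hgval j (by omega), ← hgval (j+1) (by omega)]
    exact floor3 d s g j
  -- S(s) + S(-s) = n + 1
  have hcompl : ∀ s : ℤ, Int.gcd s d = 1 →
      ∑ i ∈ range (n+1), mu d (-s) g i
        = (n + 1 : ℝ) - ∑ i ∈ range (n+1), mu d s g i := by
    intro s hs
    exact sum_mu_neg d n s g hd hs hgb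
  constructor
  · -- (*) → (SS)
    intro hstar s hs
    have hs' : Int.gcd (-s) (d : ℤ) = 1 := by rw [Int.neg_gcd]; exact hs
    have hconst : ∀ t : ℤ, Int.gcd t (d : ℤ) = 1 →
        ∀ j, 1 ≤ j → j ≤ n → aa d t g j = aa d t g 1 := by
      intro t ht
      apply carries_const d n t g hn
      intro j hj1 hj2
      have := hstar t ht j hj1 hj2
      rwa [hstar_iff t j hj1 hj2] at this
    have hform : ∀ t : ℤ, Int.gcd t (d : ℤ) = 1 →
        ∑ i ∈ range (n+1), mu d t g i
          = nu d t g (n+1) + (n : ℝ) * (aa d t g 1 : ℝ) := by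
      intro t ht
      rw [sum_mu_eq d t g (n+1), sum_aa_split]
      congr 1
      calc ∑ x ∈ range n, (aa d t g (x+1) : ℝ)
          = ∑ _x ∈ range n, (aa d t g 1 : ℝ) := sum_congr rfl (fun x hx => by
              have hxn := mem_range.mp hx
              rw [hconst t ht (x+1) (by omega) (by omega)])
        _ = (n : ℝ) * (aa d t g 1 : ℝ) := by rw [sum_const, card_range, nsmul_eq_mul]
    have hb1 := aa_bounds d s g 1
    have hb1' := aa_bounds d (-s) g 1
    rw [hSpos s, hSneg s, hcompl s hs]
    rcases (by omega : aa d s g 1 = 0 ∨ aa d s g 1 = 1) with h0 | h1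
    · left
      rw [hform s hs, h0]
      have := nu_lt_one d s g (n+1)
      push_cast
      linarith
    · right
      have hfs := hform s hs
      have hfs' := hform (-s) hs'
      rw [hcompl s hs] at hfs'
      rw [hfs, h1] at hfs' ⊢
      rcases (by omega : aa d (-s) g 1 = 0 ∨ aa d (-s) g 1 = 1) with h0' | h1'
      · rw [h0'] at hfs'
        have := nu_lt_one d (-s) g (n+1)
        have := nu_nonneg d s g (n+1)
        push_cast at hfs' ⊢
        linarith
      · rw [h1'] at hfs'
        have := nu_nonneg d (-s) g (n+1)
        have := nu_nonneg d s g (n+1)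
        have hnn : (2 : ℝ) ≤ (n : ℝ) := by exact_mod_cast hn
        push_cast at hfs'
        linarith
  · -- (SS) → (*)
    intro hss s hs j hj1 hj2
    rw [hstar_iff s j hj1 hj2]
    rcases hss s hs with h | h
    · rw [hSpos s] at h
      have hz := all_aa_zero d n s g h
      have e1 : aa d s g j = 0 := by
        have := hz (j - 1) (by omega)
        rwa [Nat.sub_add_cancel hj1] at this
      have e2 : aa d s g (j+1) = 0 := hz j (by omega)
      rw [e1, e2]
      exact Even.zero
    · rw [hSneg s, hcompl s hs] at h
      have hS : (n : ℝ) < ∑ i ∈ range (n+1), mu d s g i := by linarith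
      have ho := all_aa_one d n s g hS
      have e1 : aa d s g j = 1 := by
        have := ho (j - 1) (by omega)
        rwa [Nat.sub_add_cancel hj1] at this
      have e2 : aa d s g (j+1) = 1 := ho j (by omega)
      rw [e1, e2]
      decide
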